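/- Let (X, ρ, μ) be an Ahlfors regular metric measure space of dimension d > 0 with finite measure, equipped with a family of dyadic cubes. Then there exist positive constants c₃ and c₄ such that for every positive integer N there is a partition of X into exactly N measurable regions, each contained in a closed ball of radius c₃ N^{-1/d} and each containing an open ball of radius c₄ N^{-1/d}. -/

import Mathlib

open MeasureTheory Metric Set
open scoped ENNReal NNReal

noncomputable def covRadAux {X : Type*} [MetricSpace X] (F : Finset X) : ℝ :=
  ⨆ y : X, Metric.infDist y (F : Set X)

noncomputable def greedyPtAux {X : Type*} [MetricSpace X] (p₀ : X) (F : Finset X) : X :=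
  @dite _ (∃ y : X, covRadAux F / 2 < Metric.infDist y (F : Set X)) (Classical.dec _)
    (fun h => h.choose) (fun _ => p₀)

open scoped Classical in
noncomputable def greedyNetAux {X : Type*} [MetricSpace X] (p₀ : X) : ℕ → Finset X
  | 0 => ∅
  | n + 1 => insert (greedyPtAux p₀ (greedyNetAux p₀ n)) (greedyNetAux p₀ n)

theorem greedyPtAux_spec {X : Type*} [MetricSpace X] (p₀ : X) (F : Finset X)
    (h : ∃ y : X, covRadAux F / 2 < Metric.infDist y (F : Set X)) :
    covRadAux F / 2 < Metric.infDist (greedyPtAux p₀ F) (F : Set X) := by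
  rw [greedyPtAux, dif_pos h]; exact h.choose_spec

theorem auxBound₁ {d c M s n : ℝ} (hd : 0 < d) (hc : 0 < c) (hs : 0 ≤ s) (hn : 0 < n)
    (h : n * (c * s ^ d) ≤ M) : s ≤ (M / c) ^ (1 / d) * n ^ (-(1 / d)) := by
  have hsd0 : (0:ℝ) ≤ s ^ d := Real.rpow_nonneg hs d
  have hM0 : 0 ≤ M := le_trans (by positivity) h
  have hsd : s ^ d ≤ M / c / n := by
    rw [div_div, le_div_iff₀ (by positivity)]
    nlinarith
  have h2 : (s ^ d) ^ (1/d) ≤ (M / c / n) ^ (1/d) :=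
    Real.rpow_le_rpow hsd0 hsd (by positivity)
  have h3 : (s ^ d) ^ (1/d) = s := by
    rw [← Real.rpow_mul hs, mul_one_div, div_self hd.ne', Real.rpow_one]
  have h4 : (M / c / n) ^ (1/d) = (M/c) ^ (1/d) * n ^ (-(1/d)) := by
    rw [Real.div_rpow (by positivity) hn.le, Real.rpow_neg hn.le, div_eq_mul_inv]
  rw [h3, h4] at h2; exact h2

theorem auxBound₂ {d c M s n : ℝ} (hd : 0 < d) (hc : 0 < c) (hs : 0 ≤ s) (hn : 0 < n)
    (hM : 0 ≤ M) (h : M ≤ n * (c * s ^ d)) : (M / c) ^ (1 / d) * n ^ (-(1 / d)) ≤ s := by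
  have hsd0 : (0:ℝ) ≤ s ^ d := Real.rpow_nonneg hs d
  have hsd : M / c / n ≤ s ^ d := by
    rw [div_div, div_le_iff₀ (by positivity)]
    nlinarith
  have h2 : (M / c / n) ^ (1/d) ≤ (s ^ d) ^ (1/d) :=
    Real.rpow_le_rpow (by positivity) hsd (by positivity)
  have h3 : (s ^ d) ^ (1/d) = s := by
    rw [← Real.rpow_mul hs, mul_one_div, div_self hd.ne', Real.rpow_one]
  have h4 : (M / c / n) ^ (1/d) = (M/c) ^ (1/d) * n ^ (-(1/d)) := by
    rw [Real.div_rpow (by positivity) hn.le, Real.rpow_neg hn.le, div_eq_mul_inv]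
  rw [h3, h4] at h2; exact h2

/-- An Ahlfors regular metric measure space of dimension `d > 0` with finite
measure, equipped with a family of dyadic cubes, can be partitioned for every positive `N`
into exactly `N` measurable regions, each contained in a closed ball of radius `c₃ N^{-1/d}`
and each containing an open ball of radius `c₄ N^{-1/d}`. -/
theorem exists_partition_of_dyadic_cubes
    {X : Type*} [MetricSpace X] [CompleteSpace X]
    [MeasurableSpace X] [BorelSpace X] (μ : Measure X)
    (d c₁ c₂ : ℝ) (hd : 0 < d) (hc₁ : 0 < c₁) (hc₁₂ : c₁ ≤ c₂)
    (hfin : μ Set.univ ≠ ⊤)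
    (hdiam : 0 < EMetric.diam (Set.univ : Set X))
    (hAR : ∀ (x : X) (r : ℝ), 0 < r →
      ENNReal.ofReal r ≤ EMetric.diam (Set.univ : Set X) →
      ENNReal.ofReal (c₁ * r ^ d) ≤ μ (Metric.ball x r) ∧
        μ (Metric.ball x r) ≤ ENNReal.ofReal (c₂ * r ^ d))
    (δ a₀ a₁ : ℝ) (hδ0 : 0 < δ) (hδ1 : δ < 1) (ha₀ : 0 < a₀) (ha₀₁ : a₀ ≤ a₁)
    (I : ℤ → Type*) (Q : ∀ k : ℤ, I k → Set X) (z : ∀ k : ℤ, I k → X)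
    (hcover : ∀ k : ℤ, μ (Set.univ \ ⋃ α : I k, Q k α) = 0)
    (hdisj : ∀ (k : ℤ) (α β : I k), α ≠ β → Disjoint (Q k α) (Q k β))
    (hnest : ∀ (k l : ℤ), k < l → ∀ (α : I k) (β : I l),
      Q l β ⊆ Q k α ∨ Disjoint (Q l β) (Q k α))
    (hinner : ∀ (k : ℤ) (α : I k), Metric.ball (z k α) (a₀ * δ ^ k) ⊆ Q k α)
    (houter : ∀ (k : ℤ) (α : I k), Q k α ⊆ Metric.ball (z k α) (a₁ * δ ^ k)) :
    ∃ c₃ c₄ : ℝ, 0 < c₃ ∧ 0 < c₄ ∧ ∀ N : ℕ, 0 < N →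
      ∃ P : Fin N → Set X,
        (∀ i, MeasurableSet (P i)) ∧
        Pairwise (Function.onFun Disjoint P) ∧
        (⋃ i, P i) = Set.univ ∧
        ∀ i, (∃ x : X, P i ⊆ Metric.closedBall x (c₃ * (N : ℝ) ^ (-(1 / d)))) ∧
          ∃ y : X, Metric.ball y (c₄ * (N : ℝ) ^ (-(1 / d))) ⊆ P i := by
  classical
  clear hcover hdisj hnest hinner houter
  have hXne : Nonempty X := by
    by_contra h
    rw [not_nonempty_iff] at h
    rw [Set.univ_eq_empty_iff.mpr h] at hdiam
    rw [show EMetric.diam (∅ : Set X) = 0 from Metric.ediam_empty] at hdiam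
    exact lt_irrefl 0 hdiam
  obtain ⟨p₀⟩ := hXne
  -- finite diameter
  have hDfin : EMetric.diam (Set.univ : Set X) ≠ ⊤ := by
    intro hD
    set M₀ := (μ Set.univ).toReal with hM₀
    have hM₀0 : 0 ≤ M₀ := ENNReal.toReal_nonneg
    set r := ((M₀ + 1) / c₁) ^ (1/d) with hrdef
    have hr : 0 < r := by positivity
    have h1 := (hAR p₀ r hr (by rw [hD]; exact le_top)).1
    have h2 : c₁ * r ^ d = M₀ + 1 := by
      rw [hrdef, ← Real.rpow_mul (by positivity), one_div_mul_cancel hd.ne',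
        Real.rpow_one, mul_div_cancel₀ _ hc₁.ne']
    have h3 : ENNReal.ofReal (M₀ + 1) ≤ ENNReal.ofReal M₀ := by
      rw [← h2]
      refine h1.trans ((measure_mono (subset_univ _)).trans ?_)
      rw [← ENNReal.ofReal_toReal hfin]
    have := (ENNReal.ofReal_le_ofReal_iff hM₀0).mp h3
    linarith
  set Dr := (EMetric.diam (Set.univ : Set X)).toReal with hDrdef
  have hDr : 0 < Dr := ENNReal.toReal_pos hdiam.ne' hDfin
  have hDreq : ENNReal.ofReal Dr = EMetric.diam (Set.univ : Set X) :=
    ENNReal.ofReal_toReal hDfin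
  have hdist : ∀ a b : X, dist a b ≤ Dr := by
    intro a b
    rw [dist_edist, hDrdef]
    exact ENNReal.toReal_mono hDfin (EMetric.edist_le_diam_of_mem (mem_univ _) (mem_univ _))
  have hlow : ∀ (a : X) (r : ℝ), 0 < r → r ≤ Dr →
      ENNReal.ofReal (c₁ * r ^ d) ≤ μ (Metric.ball a r) := by
    intro a r hr hrD
    exact (hAR a r hr (by rw [← hDreq]; exact ENNReal.ofReal_le_ofReal hrD)).1
  have hup : ∀ (a : X) (r : ℝ), 0 < r → r ≤ Dr →
      μ (Metric.ball a r) ≤ ENNReal.ofReal (c₂ * r ^ d) := by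
    intro a r hr hrD
    exact (hAR a r hr (by rw [← hDreq]; exact ENNReal.ofReal_le_ofReal hrD)).2
  have hc₂ : 0 < c₂ := lt_of_lt_of_le hc₁ hc₁₂
  have hμpos : ENNReal.ofReal (c₁ * Dr ^ d) ≤ μ Set.univ :=
    (hlow p₀ Dr hDr le_rfl).trans (measure_mono (subset_univ _))
  set Mr := (μ Set.univ).toReal with hMrdef
  have hμeq : μ Set.univ = ENNReal.ofReal Mr := (ENNReal.ofReal_toReal hfin).symm
  have hMr : 0 < Mr := by
    have h1 : (0:ℝ≥0∞) < ENNReal.ofReal (c₁ * Dr ^ d) := by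
      rw [ENNReal.ofReal_pos]; positivity
    have := h1.trans_le hμpos
    exact ENNReal.toReal_pos this.ne' hfin
  -- singletons are null, X is infinite
  have hsing : ∀ a : X, μ {a} = 0 := by
    intro a
    refine le_antisymm ?_ (zero_le ..)
    refine ENNReal.le_of_forall_pos_le_add fun ε hε _ => ?_
    rw [zero_add]
    set r := min Dr (((ε:ℝ) / c₂) ^ (1/d)) with hrdef
    have hεpos : (0:ℝ) < (ε:ℝ) := hε
    have hr : 0 < r := lt_min hDr (by positivity)
    have h1 : μ {a} ≤ μ (Metric.ball a r) :=
      measure_mono (Set.singleton_subset_iff.mpr (Metric.mem_ball_self hr))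
    have h2 : μ (Metric.ball a r) ≤ ENNReal.ofReal (c₂ * r ^ d) :=
      hup a r hr (min_le_left _ _)
    have h3 : c₂ * r ^ d ≤ (ε:ℝ) := by
      have hr2 : r ^ d ≤ (((ε:ℝ) / c₂) ^ (1/d)) ^ d :=
        Real.rpow_le_rpow hr.le (min_le_right _ _) hd.le
      have hr3 : (((ε:ℝ) / c₂) ^ (1/d)) ^ d = (ε:ℝ) / c₂ := by
        rw [← Real.rpow_mul (by positivity), one_div_mul_cancel hd.ne', Real.rpow_one]
      rw [hr3] at hr2
      calc c₂ * r ^ d ≤ c₂ * ((ε:ℝ) / c₂) := by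
            exact mul_le_mul_of_nonneg_left hr2 hc₂.le
        _ = (ε:ℝ) := mul_div_cancel₀ _ hc₂.ne'
    calc μ {a} ≤ ENNReal.ofReal (c₂ * r ^ d) := h1.trans h2
      _ ≤ ENNReal.ofReal (ε:ℝ) := ENNReal.ofReal_le_ofReal h3
      _ = (ε : ℝ≥0∞) := ENNReal.ofReal_coe_nnreal
  have hXinf : Infinite X := by
    by_contra h
    rw [not_infinite_iff_finite] at h
    have hu : (Set.univ : Set X) = ⋃ a : X, {a} := by
      ext p; simp
    have h0 : μ Set.univ = 0 := by
      rw [hu]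
      exact measure_iUnion_null fun a => hsing a
    rw [h0] at hμpos
    have : (0:ℝ≥0∞) < ENNReal.ofReal (c₁ * Dr ^ d) := by
      rw [ENNReal.ofReal_pos]; positivity
    exact this.ne' (le_antisymm hμpos (zero_le ..))
  -- upper bound for closed balls
  set A := max (c₂ * 2 ^ (d:ℝ)) (Mr * 2 ^ (d:ℝ) / Dr ^ d) with hAdef
  have h2d : (0:ℝ) < 2 ^ (d:ℝ) := Real.rpow_pos_of_pos (by norm_num) d
  have hA : 0 < A := lt_of_lt_of_le (by positivity) (le_max_left _ _)
  have hcb : ∀ (a : X) (r : ℝ), 0 < r → r ≤ Dr →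
      μ (Metric.closedBall a r) ≤ ENNReal.ofReal (A * r ^ d) := by
    intro a r hr hrD
    have hrd : (0:ℝ) < r ^ d := Real.rpow_pos_of_pos hr d
    rcases le_or_gt r (Dr/2) with h | h
    · have hsub : Metric.closedBall a r ⊆ Metric.ball a (2*r) :=
        Metric.closedBall_subset_ball (by linarith)
      have h1 : μ (Metric.closedBall a r) ≤ ENNReal.ofReal (c₂ * (2*r) ^ d) :=
        (measure_mono hsub).trans (hup a (2*r) (by linarith) (by linarith))
      refine h1.trans (ENNReal.ofReal_le_ofReal ?_)
      have h2 : (2*r) ^ (d:ℝ) = 2 ^ (d:ℝ) * r ^ d := Real.mul_rpow (by norm_num) hr.le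
      rw [h2, ← mul_assoc]
      exact mul_le_mul_of_nonneg_right (le_max_left _ _) hrd.le
    · have h1 : μ (Metric.closedBall a r) ≤ ENNReal.ofReal Mr := by
        rw [← hμeq]; exact measure_mono (subset_univ _)
      refine h1.trans (ENNReal.ofReal_le_ofReal ?_)
      have hDrd : (0:ℝ) < Dr ^ d := Real.rpow_pos_of_pos hDr d
      have h2 : (Dr/2) ^ (d:ℝ) ≤ r ^ d := Real.rpow_le_rpow (by positivity) h.le hd.le
      have h3 : (Dr/2) ^ (d:ℝ) = Dr ^ d / 2 ^ (d:ℝ) := Real.div_rpow hDr.le (by norm_num : (0:ℝ) ≤ 2) d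
      have h4 : Mr * 2 ^ (d:ℝ) / Dr ^ d ≤ A := le_max_right _ _
      have h5 : Mr = Mr * 2 ^ (d:ℝ) / Dr ^ d * (Dr ^ d / 2 ^ (d:ℝ)) := by
        field_simp
      calc Mr = Mr * 2 ^ (d:ℝ) / Dr ^ d * (Dr ^ d / 2 ^ (d:ℝ)) := h5
        _ ≤ A * (Dr ^ d / 2 ^ (d:ℝ)) := by
            refine mul_le_mul_of_nonneg_right h4 (by positivity)
        _ = A * (Dr/2) ^ (d:ℝ) := by rw [h3]
        _ ≤ A * r ^ d := mul_le_mul_of_nonneg_left h2 hA.le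
  -- the greedy net
  set F : ℕ → Finset X := greedyNetAux p₀ with hFdef
  set x : ℕ → X := fun n => greedyPtAux p₀ (F n) with hxdef
  have hFsucc : ∀ n, F (n + 1) = insert (x n) (F n) := fun n => by
    simp [hFdef, hxdef, greedyNetAux]
  have hFmono : ∀ {m n : ℕ}, m ≤ n → F m ⊆ F n := by
    intro m n hmn
    induction n with
    | zero => rw [Nat.le_zero.mp hmn]
    | succ k ih =>
      rcases Nat.lt_or_ge m (k+1) with h | h
      · exact (ih (Nat.lt_succ_iff.mp h)).trans (by rw [hFsucc]; exact Finset.subset_insert _ _)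
      · rw [Nat.le_antisymm hmn h]
  have hmem : ∀ i n : ℕ, i < n → x i ∈ F n := by
    intro i n hin
    refine hFmono hin ?_
    rw [hFsucc]; exact Finset.mem_insert_self _ _
  have hmemrev : ∀ n (p : X), p ∈ F n → ∃ j, j < n ∧ p = x j := by
    intro n
    induction n with
    | zero => intro p hp; simp [hFdef, greedyNetAux] at hp
    | succ k ih =>
      intro p hp
      rw [hFsucc, Finset.mem_insert] at hp
      rcases hp with h | h
      · exact ⟨k, Nat.lt_succ_self k, h⟩
      · obtain ⟨j, hj, hj2⟩ := ih p h
        exact ⟨j, hj.trans (Nat.lt_succ_self k), hj2⟩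
  have hFcard : ∀ n, (F n).card ≤ n := by
    intro n
    induction n with
    | zero => simp [hFdef, greedyNetAux]
    | succ k ih =>
      rw [hFsucc]
      exact (Finset.card_insert_le _ _).trans (Nat.succ_le_succ ih)
  have hFne : ∀ n, 0 < n → (F n).Nonempty := by
    intro n hn
    obtain ⟨k, rfl⟩ := Nat.exists_eq_succ_of_ne_zero hn.ne'
    rw [hFsucc]; exact Finset.insert_nonempty _ _
  have hinfDr : ∀ (y : X) (G : Finset X), Metric.infDist y (G : Set X) ≤ Dr := by
    intro y G
    rcases G.eq_empty_or_nonempty with rfl | ⟨p, hp⟩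
    · simp [Metric.infDist_empty, hDr.le]
    · exact (Metric.infDist_le_dist_of_mem (Finset.mem_coe.mpr hp)).trans (hdist y p)
  have hbdd : ∀ G : Finset X, BddAbove (Set.range fun y : X => Metric.infDist y (G : Set X)) :=
    fun G => ⟨Dr, by rintro r ⟨y, rfl⟩; exact hinfDr y G⟩
  set t : ℕ → ℝ := fun n => covRadAux (F n) with htdef
  have hcov : ∀ n (y : X), Metric.infDist y (F n : Set X) ≤ t n := fun n y =>
    le_ciSup (hbdd (F n)) y
  have htDr : ∀ n, t n ≤ Dr := fun n => ciSup_le fun y => hinfDr y (F n)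
  have htpos : ∀ n, 0 < n → 0 < t n := by
    intro n hn
    obtain ⟨y, hy⟩ := Infinite.exists_notMem_finset (F n)
    have h1 : 0 < Metric.infDist y (F n : Set X) :=
      ((F n).finite_toSet.isClosed.notMem_iff_infDist_pos
        (by exact_mod_cast hFne n hn)).1 (by simpa using hy)
    exact h1.trans_le (hcov n y)
  have hxspec : ∀ n, 0 < n → t n / 2 < Metric.infDist (x n) (F n : Set X) := by
    intro n hn
    refine greedyPtAux_spec p₀ (F n) ?_
    refine exists_lt_of_lt_ciSup ?_
    have h0 : 0 < t n := htpos n hn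
    show covRadAux (F n) / 2 < covRadAux (F n)
    exact half_lt_self h0
  have htanti : ∀ {m n : ℕ}, 0 < m → m ≤ n → t n ≤ t m := by
    intro m n hm hmn
    refine ciSup_le fun y => ?_
    refine le_trans ?_ (hcov m y)
    exact Metric.infDist_le_infDist_of_subset
      (by exact_mod_cast hFmono hmn) (by exact_mod_cast hFne m hm)
  have hsep : ∀ i j : ℕ, i < j → t j / 2 ≤ dist (x i) (x j) := by
    intro i j hij
    have h1 : t j / 2 < Metric.infDist (x j) (F j : Set X) :=
      hxspec j ((Nat.zero_le i).trans_lt hij)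
    have h2 : Metric.infDist (x j) (F j : Set X) ≤ dist (x j) (x i) :=
      Metric.infDist_le_dist_of_mem (Finset.mem_coe.mpr (hmem i j hij))
    rw [dist_comm]
    linarith
  have hcovpt : ∀ n, 0 < n → ∀ y : X, ∃ p ∈ F n, dist y p ≤ t n := by
    intro n hn y
    obtain ⟨p, hpF, hmin⟩ := Finset.exists_min_image (F n) (fun p => dist y p) (hFne n hn)
    refine ⟨p, hpF, ?_⟩
    by_contra hlt
    push_neg at hlt
    have h1 : Metric.infDist y (F n : Set X) < dist y p := lt_of_le_of_lt (hcov n y) hlt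
    obtain ⟨q, hq, hq2⟩ := (Metric.infDist_lt_iff (by exact_mod_cast hFne n hn)).1 h1
    exact absurd hq2 (not_lt.mpr (hmin q (by exact_mod_cast hq)))
  -- measure estimates
  have hupperR : ∀ n : ℕ, 0 < n → ((n:ℝ) + 1) * (c₁ * (t n / 4) ^ d) ≤ Mr := by
    intro n hn
    have htp := htpos n hn
    have hr : 0 < t n / 4 := by linarith
    have hrD : t n / 4 ≤ Dr := by linarith [htDr n]
    have hdisjB : (↑(Finset.range (n+1)) : Set ℕ).PairwiseDisjoint
        (fun i => Metric.ball (x i) (t n / 4)) := by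
      have key : ∀ i j : ℕ, i < j → j ≤ n →
          Disjoint (Metric.ball (x i) (t n / 4)) (Metric.ball (x j) (t n / 4)) := by
        intro i j hlt hle
        refine Metric.ball_disjoint_ball ?_
        have h1 := hsep i j hlt
        have h2 : t n ≤ t j := htanti ((Nat.zero_le i).trans_lt hlt) hle
        linarith
      intro i hi j hj hij
      simp only [Finset.coe_range, Set.mem_Iio] at hi hj
      rcases lt_or_gt_of_ne hij with hlt | hlt
      · exact key i j hlt (Nat.lt_succ_iff.mp hj)
      · exact (key j i hlt (Nat.lt_succ_iff.mp hi)).symm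
    have hsum : ∑ i ∈ Finset.range (n+1), μ (Metric.ball (x i) (t n / 4)) ≤ μ Set.univ := by
      rw [← measure_biUnion_finset hdisjB (fun i _ => measurableSet_ball)]
      exact measure_mono (subset_univ _)
    have htot : ENNReal.ofReal (((n:ℝ)+1) * (c₁ * (t n / 4) ^ d)) ≤ μ Set.univ := by
      calc ENNReal.ofReal (((n:ℝ)+1) * (c₁ * (t n / 4) ^ d))
          = ∑ _i ∈ Finset.range (n+1), ENNReal.ofReal (c₁ * (t n / 4) ^ d) := by
            rw [Finset.sum_const, Finset.card_range, nsmul_eq_mul,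
              ENNReal.ofReal_mul (by positivity : (0:ℝ) ≤ (n:ℝ)+1),
              show ((n:ℝ)+1) = ((n+1:ℕ):ℝ) by push_cast; ring,
              ENNReal.ofReal_natCast]
        _ ≤ ∑ i ∈ Finset.range (n+1), μ (Metric.ball (x i) (t n / 4)) :=
            Finset.sum_le_sum fun i _ => hlow (x i) _ hr hrD
        _ ≤ μ Set.univ := hsum
    rw [hμeq] at htot
    exact (ENNReal.ofReal_le_ofReal_iff hMr.le).mp htot
  have hlowerR : ∀ n : ℕ, 0 < n → Mr ≤ (n:ℝ) * (A * t n ^ d) := by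
    intro n hn
    have htp := htpos n hn
    have hcoverU : (Set.univ : Set X) ⊆ ⋃ p ∈ F n, Metric.closedBall p (t n) := by
      intro y _
      obtain ⟨p, hp, hdp⟩ := hcovpt n hn y
      simp only [Set.mem_iUnion]
      exact ⟨p, hp, Metric.mem_closedBall.mpr hdp⟩
    have h1 : μ Set.univ ≤ ∑ p ∈ F n, μ (Metric.closedBall p (t n)) :=
      (measure_mono hcoverU).trans (measure_biUnion_finset_le _ _)
    have h2 : ∑ p ∈ F n, μ (Metric.closedBall p (t n)) ≤
        ∑ _p ∈ F n, ENNReal.ofReal (A * t n ^ d) :=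
      Finset.sum_le_sum fun p _ => hcb p (t n) htp (htDr n)
    have h3 : ∑ _p ∈ F n, ENNReal.ofReal (A * t n ^ d) ≤
        ENNReal.ofReal ((n:ℝ) * (A * t n ^ d)) := by
      rw [Finset.sum_const, nsmul_eq_mul]
      calc ((F n).card : ℝ≥0∞) * ENNReal.ofReal (A * t n ^ d)
          ≤ (n : ℝ≥0∞) * ENNReal.ofReal (A * t n ^ d) :=
            mul_le_mul_left (by exact_mod_cast hFcard n) _
        _ = ENNReal.ofReal ((n:ℝ) * (A * t n ^ d)) := by
            rw [ENNReal.ofReal_mul (by positivity : (0:ℝ) ≤ (n:ℝ)), ENNReal.ofReal_natCast]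
    have htot := (h1.trans h2).trans h3
    rw [hμeq] at htot
    have hrhs : (0:ℝ) ≤ (n:ℝ) * (A * t n ^ d) :=
      mul_nonneg (Nat.cast_nonneg n) (mul_nonneg hA.le (Real.rpow_nonneg htp.le d))
    exact (ENNReal.ofReal_le_ofReal_iff hrhs).mp htot
  -- the constants
  refine ⟨4 * (Mr / c₁) ^ (1/d), (Mr / A) ^ (1/d) / 4, by positivity, by positivity, ?_⟩
  intro N hN
  have hNR : (0:ℝ) < N := by exact_mod_cast hN
  set q : Fin N → X := fun i => x (i : ℕ) with hqdef
  set P : Fin N → Set X := fun i =>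
    {p | (∀ j : Fin N, dist p (q i) ≤ dist p (q j)) ∧
      ∀ j : Fin N, j < i → ∃ k : Fin N, dist p (q k) < dist p (q j)} with hPdef
  refine ⟨P, ?_, ?_, ?_, ?_⟩
  · -- measurability
    intro i
    have hPi : P i = (⋂ j : Fin N, {p : X | dist p (q i) ≤ dist p (q j)}) ∩
        ⋂ j : Fin N, ⋂ (_ : j < i), ⋃ k : Fin N, {p : X | dist p (q k) < dist p (q j)} := by
      ext p
      simp only [hPdef, Set.mem_setOf_eq, Set.mem_inter_iff, Set.mem_iInter, Set.mem_iUnion]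
    rw [hPi]
    refine MeasurableSet.inter ?_ ?_
    · exact MeasurableSet.iInter fun j =>
        (isClosed_le (continuous_id.dist continuous_const)
          (continuous_id.dist continuous_const)).measurableSet
    · exact MeasurableSet.iInter fun j => MeasurableSet.iInter fun _ =>
        MeasurableSet.iUnion fun k =>
          (isOpen_lt (continuous_id.dist continuous_const)
            (continuous_id.dist continuous_const)).measurableSet
  · -- pairwise disjoint
    have key : ∀ i j : Fin N, i < j → Disjoint (P i) (P j) := by
      intro i j hij
      rw [Set.disjoint_left]
      rintro p ⟨h1, h2⟩ ⟨h1', h2'⟩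
      obtain ⟨k, hk⟩ := h2' i hij
      exact absurd (h1 k) (not_le.mpr hk)
    intro i j hij
    rcases lt_or_gt_of_ne hij with h | h
    · exact key i j h
    · exact (key j i h).symm
  · -- cover
    ext p
    simp only [Set.mem_iUnion, Set.mem_univ, iff_true]
    have hfne : (Finset.univ : Finset (Fin N)).Nonempty := ⟨⟨0, hN⟩, Finset.mem_univ _⟩
    obtain ⟨i₀, -, hi₀⟩ := Finset.exists_min_image Finset.univ (fun i => dist p (q i)) hfne
    set S : Finset (Fin N) := Finset.univ.filter (fun i => ∀ j, dist p (q i) ≤ dist p (q j))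
      with hSdef
    have hSne : S.Nonempty := ⟨i₀, by
      simp only [hSdef, Finset.mem_filter, Finset.mem_univ, true_and]
      exact fun j => hi₀ j (Finset.mem_univ j)⟩
    refine ⟨S.min' hSne, ?_, ?_⟩
    · have hm := S.min'_mem hSne
      simp only [hSdef, Finset.mem_filter, Finset.mem_univ, true_and] at hm
      exact hm
    · intro j hj
      have hjS : j ∉ S := fun hjmem => absurd (S.min'_le j hjmem) (not_le.mpr hj)
      simp only [hSdef, Finset.mem_filter, Finset.mem_univ, true_and] at hjS
      push_neg at hjS
      exact hjS
  · -- ball bounds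
    intro i
    constructor
    · -- outer bound
      refine ⟨q i, ?_⟩
      have houterP : P i ⊆ Metric.closedBall (q i) (t N) := by
        rintro p ⟨h1, h2⟩
        obtain ⟨pt, hptF, hptd⟩ := hcovpt N hN p
        obtain ⟨j, hj, rfl⟩ := hmemrev N pt hptF
        exact Metric.mem_closedBall.mpr ((h1 ⟨j, hj⟩).trans hptd)
      refine houterP.trans (Metric.closedBall_subset_closedBall ?_)
      have hb := hupperR N hN
      have hb1 : t N / 4 ≤ (Mr / c₁) ^ (1/d) * ((N:ℝ)+1) ^ (-(1/d)) :=
        auxBound₁ hd hc₁ (by linarith [htpos N hN]) (by positivity) hb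
      have hb2 : ((N:ℝ)+1) ^ (-(1/d):ℝ) ≤ (N:ℝ) ^ (-(1/d):ℝ) :=
        Real.rpow_le_rpow_of_nonpos hNR (by linarith) (neg_nonpos.mpr (by positivity))
      have hb3 := mul_le_mul_of_nonneg_left hb2
        (Real.rpow_nonneg (by positivity : (0:ℝ) ≤ Mr / c₁) (1/d))
      calc t N = 4 * (t N / 4) := by ring
        _ ≤ 4 * ((Mr / c₁) ^ (1/d) * ((N:ℝ)+1) ^ (-(1/d))) := by linarith
        _ ≤ 4 * ((Mr / c₁) ^ (1/d) * (N:ℝ) ^ (-(1/d))) := by linarith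
        _ = 4 * (Mr / c₁) ^ (1/d) * (N:ℝ) ^ (-(1/d)) := by ring
    · -- inner bound
      refine ⟨q i, ?_⟩
      by_cases hN1 : N = 1
      · subst hN1
        intro p _
        refine ⟨?_, ?_⟩
        · intro j
          have hji : j = i := Subsingleton.elim j i
          rw [hji]
        · intro j hj
          have hj' : (j:ℕ) < (i:ℕ) := hj
          have := i.isLt
          omega
      · have hN2 : 2 ≤ N := by omega
        have hN1' : 0 < N - 1 := by omega
        have hσ : 0 < t (N-1) := htpos _ hN1'
        have hsepN : ∀ i' j' : Fin N, i' ≠ j' → t (N-1) / 2 ≤ dist (q i') (q j') := by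
          have key : ∀ a b : ℕ, a < b → b ≤ N-1 → t (N-1)/2 ≤ dist (x a) (x b) := by
            intro a b hab hble
            have h2 : t (N-1) ≤ t b := htanti ((Nat.zero_le a).trans_lt hab) hble
            linarith [hsep a b hab]
          intro i' j' hne
          have hi' := i'.isLt
          have hj' := j'.isLt
          rcases lt_trichotomy (i':ℕ) (j':ℕ) with h | h | h
          · exact key _ _ h (by omega)
          · exact absurd (Fin.ext h) hne
          · rw [dist_comm]; exact key _ _ h (by omega)
        have hNm1R : (0:ℝ) < ((N-1:ℕ):ℝ) := by exact_mod_cast hN1'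
        have hrad : (Mr / A) ^ (1/d) / 4 * (N:ℝ) ^ (-(1/d)) ≤ t (N-1) / 4 := by
          have hb := hlowerR (N-1) hN1'
          have hb1 : (Mr / A) ^ (1/d) * ((N-1:ℕ):ℝ) ^ (-(1/d)) ≤ t (N-1) :=
            auxBound₂ hd hA hσ.le hNm1R hMr.le hb
          have hb2 : (N:ℝ) ^ (-(1/d):ℝ) ≤ ((N-1:ℕ):ℝ) ^ (-(1/d):ℝ) :=
            Real.rpow_le_rpow_of_nonpos hNm1R (by exact_mod_cast Nat.sub_le N 1)
              (neg_nonpos.mpr (by positivity))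
          have hb3 := mul_le_mul_of_nonneg_left hb2
            (Real.rpow_nonneg (by positivity : (0:ℝ) ≤ Mr / A) (1/d))
          linarith
        refine Set.Subset.trans (Metric.ball_subset_ball hrad) ?_
        intro p hp
        have hp4 : dist p (q i) < t (N-1) / 4 := Metric.mem_ball.mp hp
        have hstrict : ∀ j : Fin N, j ≠ i → dist p (q i) < dist p (q j) := by
          intro j hj
          have h1 := hsepN i j (fun h => hj h.symm)
          have h2 : dist (q i) (q j) ≤ dist (q i) p + dist p (q j) := dist_triangle _ _ _
          have h3 : dist (q i) p = dist p (q i) := dist_comm _ _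
          linarith
        refine ⟨?_, ?_⟩
        · intro j
          by_cases hji : j = i
          · rw [hji]
          · exact (hstrict j hji).le
        · intro j hj
          exact ⟨i, hstrict j (Fin.ne_of_lt hj)⟩
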